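/- With the same setup as the distributional Bellman operator T on Δ([0,1/(1−γ)])^S, T is non-expansive in the supremum total variation metric: sup_{s∈S} TV([Tη](s), [Tη'](s)) ≤ sup_{s∈S} TV(η(s), η'(s)). -/

import Mathlib

open MeasureTheory Set
open scoped ENNReal

/-- The total variation distance between two measures on `ℝ`. -/
noncomputable def TV (μ ν : Measure ℝ) : ℝ :=
  ⨆ A : {A : Set ℝ // MeasurableSet A}, |(μ A).toReal - (ν A).toReal|

/-- The distributional Bellman operator:
`[Tη](s) = ∑_{a,s'} π(a|s) P(s'|s,a) ∫ (b_{r,γ})_# η(s') 𝒫_R(dr|s,a)`. -/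
noncomputable def bellman {S A : Type*} [Fintype S] [Fintype A]
    (γ : ℝ) (pol : S → A → ℝ≥0∞) (P : S → A → S → ℝ≥0∞)
    (R : S → A → Measure ℝ) (η : S → Measure ℝ) : S → Measure ℝ :=
  fun s => ∑ a : A, ∑ s' : S, (pol s a * P s a s') •
    ((R s a).bind (fun r => (η s').map (fun x => r + γ * x)))

instance : Nonempty {A : Set ℝ // MeasurableSet A} := ⟨⟨∅, MeasurableSet.empty⟩⟩

lemma TV_bddAbove (μ ν : Measure ℝ) (hμ : μ Set.univ ≤ 1) (hν : ν Set.univ ≤ 1) :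
    BddAbove (Set.range fun A : {A : Set ℝ // MeasurableSet A} =>
      |(μ A).toReal - (ν A).toReal|) := by
  refine ⟨2, ?_⟩
  rintro x ⟨A, rfl⟩
  have h1 : (μ (A : Set ℝ)).toReal ≤ 1 := by
    have h := (measure_mono (Set.subset_univ (A : Set ℝ))).trans hμ
    simpa using ENNReal.toReal_mono (by simp) h
  have h2 : (ν (A : Set ℝ)).toReal ≤ 1 := by
    have h := (measure_mono (Set.subset_univ (A : Set ℝ))).trans hν
    simpa using ENNReal.toReal_mono (by simp) h
  have h3 : (0:ℝ) ≤ (μ (A : Set ℝ)).toReal := ENNReal.toReal_nonneg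
  have h4 : (0:ℝ) ≤ (ν (A : Set ℝ)).toReal := ENNReal.toReal_nonneg
  rw [abs_sub_le_iff]
  constructor <;> linarith

lemma le_TV (μ ν : Measure ℝ) (hμ : μ Set.univ ≤ 1) (hν : ν Set.univ ≤ 1)
    {B : Set ℝ} (hB : MeasurableSet B) :
    |(μ B).toReal - (ν B).toReal| ≤ TV μ ν :=
  le_ciSup (TV_bddAbove μ ν hμ hν) ⟨B, hB⟩

lemma TV_nonneg (μ ν : Measure ℝ) (hμ : μ Set.univ ≤ 1) (hν : ν Set.univ ≤ 1) :
    0 ≤ TV μ ν := by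
  exact (abs_nonneg _).trans (le_TV μ ν hμ hν MeasurableSet.empty)

lemma TV_le (μ ν : Measure ℝ) {c : ℝ}
    (h : ∀ B : Set ℝ, MeasurableSet B → |(μ B).toReal - (ν B).toReal| ≤ c) :
    TV μ ν ≤ c :=
  ciSup_le fun A => h A A.2

lemma meas_kernel (γ : ℝ) (μ : Measure ℝ) [SFinite μ] :
    Measurable fun r : ℝ => μ.map (fun x => r + γ * x) := by
  rw [Measure.measurable_measure]
  intro t ht
  have hmap : ∀ r : ℝ, (μ.map (fun x => r + γ * x)) t = μ ((fun x => r + γ * x) ⁻¹' t) :=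
    fun r => Measure.map_apply (by fun_prop) ht
  simp_rw [hmap]
  have : ∀ r : ℝ, (fun x => r + γ * x) ⁻¹' t
      = Prod.mk r ⁻¹' ((fun p : ℝ × ℝ => p.1 + γ * p.2) ⁻¹' t) := fun r => rfl
  simp_rw [this]
  exact measurable_measure_prodMk_left ((by fun_prop : Measurable fun p : ℝ × ℝ => p.1 + γ * p.2) ht)

theorem bellman_nonexpansive_TV
    {S A : Type*} [Fintype S] [Fintype A] [Nonempty S] [Nonempty A]
    (γ : ℝ) (hγ : γ ∈ Set.Ioo (0 : ℝ) 1)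
    (pol : S → A → ℝ≥0∞) (hpol : ∀ s, ∑ a : A, pol s a = 1)
    (P : S → A → S → ℝ≥0∞) (hP : ∀ s a, ∑ s' : S, P s a s' = 1)
    (R : S → A → Measure ℝ) (hRprob : ∀ s a, IsProbabilityMeasure (R s a))
    (hRsupp : ∀ s a, R s a (Set.Icc (0 : ℝ) 1)ᶜ = 0)
    (η η' : S → Measure ℝ)
    (hη : ∀ s, IsProbabilityMeasure (η s)) (hη' : ∀ s, IsProbabilityMeasure (η' s))
    (hηsupp : ∀ s, η s (Set.Icc (0 : ℝ) (1 / (1 - γ)))ᶜ = 0)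
    (hη'supp : ∀ s, η' s (Set.Icc (0 : ℝ) (1 / (1 - γ)))ᶜ = 0) :
    (⨆ s : S, TV (bellman γ pol P R η s) (bellman γ pol P R η' s)) ≤
      ⨆ s : S, TV (η s) (η' s) := by
  set D : ℝ := ⨆ s : S, TV (η s) (η' s) with hD
  have hbdd : BddAbove (Set.range fun s : S => TV (η s) (η' s)) :=
    Set.Finite.bddAbove (Set.finite_range _)
  have hηuniv : ∀ s : S, η s Set.univ ≤ 1 := fun s => ((hη s).measure_univ).le
  have hη'univ : ∀ s : S, η' s Set.univ ≤ 1 := fun s => ((hη' s).measure_univ).le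
  have hD0 : 0 ≤ D := by
    obtain ⟨s⟩ := ‹Nonempty S›
    exact (TV_nonneg (η s) (η' s) (hηuniv s) (hη'univ s)).trans (le_ciSup hbdd s)
  -- pointwise comparison in ℝ≥0∞
  have keyA : ∀ (μ ν : S → Measure ℝ), (∀ s, μ s Set.univ ≤ 1) → (∀ s, ν s Set.univ ≤ 1) →
      (∀ s, TV (μ s) (ν s) ≤ D) →
      ∀ s (C : Set ℝ), MeasurableSet C → μ s C ≤ ν s C + ENNReal.ofReal D := by
    intro μ ν hμu hνu hTV s C hC
    have hfin : μ s C ≠ ∞ :=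
      ((measure_mono (Set.subset_univ C)).trans (hμu s)).trans_lt ENNReal.one_lt_top |>.ne
    have hfin' : ν s C ≠ ∞ :=
      ((measure_mono (Set.subset_univ C)).trans (hνu s)).trans_lt ENNReal.one_lt_top |>.ne
    have h1 : (μ s C).toReal - (ν s C).toReal ≤ D :=
      (le_abs_self _).trans ((le_TV (μ s) (ν s) (hμu s) (hνu s) hC).trans (hTV s))
    calc μ s C = ENNReal.ofReal ((μ s C).toReal) := (ENNReal.ofReal_toReal hfin).symm
      _ ≤ ENNReal.ofReal ((ν s C).toReal + D) := ENNReal.ofReal_le_ofReal (by linarith)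
      _ = ENNReal.ofReal ((ν s C).toReal) + ENNReal.ofReal D :=
          ENNReal.ofReal_add ENNReal.toReal_nonneg hD0
      _ = ν s C + ENNReal.ofReal D := by rw [ENNReal.ofReal_toReal hfin']
  -- bellman applied to a measurable set
  have happly : ∀ (μ : S → Measure ℝ), (∀ s, IsProbabilityMeasure (μ s)) →
      ∀ s (B : Set ℝ), MeasurableSet B →
      bellman γ pol P R μ s B = ∑ a : A, ∑ s' : S, (pol s a * P s a s') *
        ∫⁻ r, μ s' ((fun x => r + γ * x) ⁻¹' B) ∂(R s a) := by
    intro μ hμ s B hB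
    simp only [bellman, Measure.finset_sum_apply, Measure.smul_apply, smul_eq_mul]
    congr 1; ext a; congr 1; ext s'
    congr 1
    rw [Measure.bind_apply hB (meas_kernel γ (μ s')).aemeasurable]
    congr 1; ext r
    exact Measure.map_apply (by fun_prop) hB
  -- bellman of a probability family is a probability measure on univ
  have huniv : ∀ (μ : S → Measure ℝ), (∀ s, IsProbabilityMeasure (μ s)) →
      ∀ s, bellman γ pol P R μ s Set.univ = 1 := by
    intro μ hμ s
    rw [happly μ hμ s Set.univ MeasurableSet.univ]
    have : ∀ a : A, ∀ s' : S,
        (∫⁻ r, μ s' ((fun x => r + γ * x) ⁻¹' Set.univ) ∂(R s a)) = 1 := by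
      intro a s'
      haveI := hRprob s a
      haveI := hμ s'
      simp [measure_univ]
    simp only [this, mul_one]
    rw [← hpol s]
    congr 1; ext a
    rw [← Finset.mul_sum, hP s a, mul_one]
  -- key inequality for bellman
  have keyB : ∀ (μ ν : S → Measure ℝ), (∀ s, IsProbabilityMeasure (μ s)) →
      (∀ s, IsProbabilityMeasure (ν s)) →
      (∀ s (C : Set ℝ), MeasurableSet C → μ s C ≤ ν s C + ENNReal.ofReal D) →
      ∀ s (B : Set ℝ), MeasurableSet B →
      bellman γ pol P R μ s B ≤ bellman γ pol P R ν s B + ENNReal.ofReal D := by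
    intro μ ν hμ hν hle s B hB
    rw [happly μ hμ s B hB, happly ν hν s B hB]
    set d := ENNReal.ofReal D with hd
    have hstep : ∀ a : A, ∀ s' : S,
        (∫⁻ r, μ s' ((fun x => r + γ * x) ⁻¹' B) ∂(R s a))
          ≤ (∫⁻ r, ν s' ((fun x => r + γ * x) ⁻¹' B) ∂(R s a)) + d := by
      intro a s'
      haveI := hRprob s a
      calc (∫⁻ r, μ s' ((fun x => r + γ * x) ⁻¹' B) ∂(R s a))
          ≤ ∫⁻ r, (ν s' ((fun x => r + γ * x) ⁻¹' B) + d) ∂(R s a) := by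
            apply lintegral_mono
            intro r
            exact hle s' _ ((by fun_prop : Measurable fun x : ℝ => r + γ * x) hB)
        _ = (∫⁻ r, ν s' ((fun x => r + γ * x) ⁻¹' B) ∂(R s a)) + d := by
            rw [lintegral_add_right _ measurable_const, lintegral_const, measure_univ, mul_one]
    calc (∑ a : A, ∑ s' : S, (pol s a * P s a s') *
          ∫⁻ r, μ s' ((fun x => r + γ * x) ⁻¹' B) ∂(R s a))
        ≤ ∑ a : A, ∑ s' : S, (pol s a * P s a s') *
          ((∫⁻ r, ν s' ((fun x => r + γ * x) ⁻¹' B) ∂(R s a)) + d) := by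
          gcongr with a _ s' _
          exact hstep a s'
      _ = (∑ a : A, ∑ s' : S, (pol s a * P s a s') *
          ∫⁻ r, ν s' ((fun x => r + γ * x) ⁻¹' B) ∂(R s a))
          + (∑ a : A, ∑ s' : S, (pol s a * P s a s')) * d := by
          simp_rw [mul_add, Finset.sum_add_distrib, Finset.sum_mul]
      _ = _ := by
          have : (∑ a : A, ∑ s' : S, (pol s a * P s a s')) = 1 := by
            rw [← hpol s]
            congr 1; ext a
            rw [← Finset.mul_sum, hP s a, mul_one]
          rw [this, one_mul]
  have hA1 : ∀ s (C : Set ℝ), MeasurableSet C → η s C ≤ η' s C + ENNReal.ofReal D :=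
    keyA η η' hηuniv hη'univ (fun s => le_ciSup hbdd s)
  have hA2 : ∀ s (C : Set ℝ), MeasurableSet C → η' s C ≤ η s C + ENNReal.ofReal D := by
    refine keyA η' η hη'univ hηuniv (fun s => ?_)
    have : TV (η' s) (η s) = TV (η s) (η' s) := by
      unfold TV
      congr 1; ext A
      rw [abs_sub_comm]
    rw [this]; exact le_ciSup hbdd s
  have hB1 := keyB η η' hη hη' hA1
  have hB2 := keyB η' η hη' hη hA2
  -- conclude
  apply ciSup_le
  intro s
  apply TV_le
  intro B hB
  have hx : bellman γ pol P R η s B ≤ 1 :=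
    (measure_mono (Set.subset_univ B)).trans (huniv η hη s).le
  have hy : bellman γ pol P R η' s B ≤ 1 :=
    (measure_mono (Set.subset_univ B)).trans (huniv η' hη' s).le
  have hxfin : bellman γ pol P R η s B ≠ ∞ := (hx.trans_lt ENNReal.one_lt_top).ne
  have hyfin : bellman γ pol P R η' s B ≠ ∞ := (hy.trans_lt ENNReal.one_lt_top).ne
  have h1 : (bellman γ pol P R η s B).toReal ≤ (bellman γ pol P R η' s B).toReal + D := by
    have := hB1 s B hB
    have ht := ENNReal.toReal_mono (by simp [hyfin, ENNReal.ofReal_ne_top]) this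
    rwa [ENNReal.toReal_add hyfin ENNReal.ofReal_ne_top, ENNReal.toReal_ofReal hD0] at ht
  have h2 : (bellman γ pol P R η' s B).toReal ≤ (bellman γ pol P R η s B).toReal + D := by
    have := hB2 s B hB
    have ht := ENNReal.toReal_mono (by simp [hxfin, ENNReal.ofReal_ne_top]) this
    rwa [ENNReal.toReal_add hxfin ENNReal.ofReal_ne_top, ENNReal.toReal_ofReal hD0] at ht
  rw [abs_sub_le_iff]
  constructor <;> linarith
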